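/- In the Ariki-Koike setting, for a = [0, a_1, ..., a_{m-1}, r] ∈ Λ[m,r] and v_a = π_a T_{w_a} π̃_{a'}, the relation v_a T_i = T_{(i)w_a^{-1}} v_a holds whenever i ≠ r - a_j for all j = 1,...,m, where (i)w_a^{-1} denotes the image of i under w_a^{-1}. -/

import Mathlib

noncomputable section
open scoped Classical
open Finset

def pApp {r : ℕ} (w : Equiv.Perm (Fin r)) (x : ℕ) : ℕ :=
  if h : x < r then (w ⟨x, h⟩ : ℕ) else x

def blockOf (c : List ℕ) (x : ℕ) : ℕ :=
  ((Finset.range c.length).filter (fun i => (c.take (i + 1)).sum ≤ x)).card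

def inYoung {r : ℕ} (c : List ℕ) (w : Equiv.Perm (Fin r)) : Prop :=
  ∀ x : Fin r, blockOf c (pApp w (x : ℕ)) = blockOf c (x : ℕ)

def conjP (l : List ℕ) : List ℕ :=
  (List.range (l.foldr max 0)).map (fun i => l.countP (fun p => decide (i < p)))

def IsPartition (l : List ℕ) : Prop :=
  l.Pairwise (· ≥ ·) ∧ ∀ p ∈ l, 0 < p

/-- The `i`-th part (0-indexed row `i` of component `k`) of a multipartition. -/
def part (L : List (List ℕ)) (k i : ℕ) : ℕ := (L.getD k []).getD i 0

/-- `(k,i,j)` (all 0-indexed) is a node of the Young diagram of the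
multipartition `L`. -/
def mpMem (L : List (List ℕ)) (p : ℕ × ℕ × ℕ) : Prop :=
  p.2.2 < part L p.1 p.2.1

/-- The Finset of nodes of the Young diagram of `L`. -/
def mpNodes (L : List (List ℕ)) : Finset (ℕ × ℕ × ℕ) :=
  (Finset.range L.length ×ˢ
      Finset.range (L.flatten.sum + L.flatten.length + 1) ×ˢ
      Finset.range (L.flatten.sum + L.flatten.length + 1)).filter (fun p => mpMem L p)

/-- Row-reading order on nodes: components in order, rows top to bottom,
within a row left to right. -/
def rowLt (p q : ℕ × ℕ × ℕ) : Prop :=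
  p.1 < q.1 ∨ (p.1 = q.1 ∧ (p.2.1 < q.2.1 ∨ (p.2.1 = q.2.1 ∧ p.2.2 < q.2.2)))

/-- Column-reading order on nodes: components in reverse order, columns left to
right, within a column top to bottom. -/
def colLt (p q : ℕ × ℕ × ℕ) : Prop :=
  q.1 < p.1 ∨ (p.1 = q.1 ∧ (p.2.2 < q.2.2 ∨ (p.2.2 = q.2.2 ∧ p.2.1 < q.2.1)))

/-- The (0-indexed) entry at node `p` of the row-filled tableau `t^λ`. -/
def rowRank (L : List (List ℕ)) (p : ℕ × ℕ × ℕ) : ℕ :=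
  ((mpNodes L).filter (fun q => rowLt q p)).card

/-- The (0-indexed) entry at node `p` of the column-filled tableau `t_λ`. -/
def colRank (L : List (List ℕ)) (p : ℕ × ℕ × ℕ) : ℕ :=
  ((mpNodes L).filter (fun q => colLt q p)).card

/-- `w` is the permutation `w_λ` defined by `t^λ w_λ = t_λ`. -/
def wprop {r : ℕ} (L : List (List ℕ)) (w : Equiv.Perm (Fin r)) : Prop :=
  ∀ p ∈ mpNodes L, pApp w (rowRank L p) = colRank L p

/-- The concatenation `λ̄'` of the dual multipartition `λ' = (λ^(m)′,…,λ^(1)′)`. -/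
def dualConcat (L : List (List ℕ)) : List ℕ := (L.reverse.map conjP).flatten


/-- `(k,i,j)` is a removable node of the multipartition `L`. -/
def isRemovableNode (L : List (List ℕ)) (p : ℕ × ℕ × ℕ) : Prop :=
  p.2.2 + 1 = part L p.1 p.2.1 ∧ part L p.1 (p.2.1 + 1) < part L p.1 p.2.1

/-- The multipartition obtained from `L` by removing the removable node `p`. -/
def removeNode (L : List (List ℕ)) (p : ℕ × ℕ × ℕ) : List (List ℕ) :=
  L.set p.1 ((L.getD p.1 []).set p.2.1 (part L p.1 p.2.1 - 1))

/-- `s` is the cycle `s_{a,b}` (0-indexed) of `Fin r`, sending `a` to `b`,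
`x` to `x-1` for `a < x ≤ b`, and fixing everything else. -/
def IsCyc {r : ℕ} (s : Equiv.Perm (Fin r)) (a b : ℕ) : Prop :=
  a ≤ b ∧ b < r ∧ pApp s a = b ∧
    (∀ x, a < x → x ≤ b → pApp s x = x - 1) ∧
    (∀ x, x < a ∨ b < x → pApp s x = x)

/-- The number of inversions, i.e. the Coxeter length, of a permutation. -/
def permLen {r : ℕ} (w : Equiv.Perm (Fin r)) : ℕ :=
  ((Finset.univ : Finset (Fin r × Fin r)).filter
    (fun p => p.1 < p.2 ∧ w p.2 < w p.1)).card

/-- The simple transposition `(i, i+1)` (0-indexed) of `Fin r`. -/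
def sgen (r i : ℕ) : Equiv.Perm (Fin r) :=
  if h : i + 1 < r then Equiv.swap ⟨i, by omega⟩ ⟨i + 1, h⟩ else 1

/-- `π_a(x) = Π_{j=1}^a (L_j - x)`. -/
def piaE (R : Type) [CommRing R] (H : Type) [Ring H] [Algebra R H]
    (Lm : ℕ → H) (x : R) (a : ℕ) : H :=
  ((List.range a).map (fun j => Lm (j + 1) - algebraMap R H x)).prod

/-- Cumulative size `a_i = |λ^(1)| + ⋯ + |λ^(i)|` of a multipartition. -/
def cumMP (M : List (List ℕ)) (i : ℕ) : ℕ := ((M.take i).map List.sum).sum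

/-- The dual multipartition `λ' = (λ^(m)′, …, λ^(1)′)`. -/
def dualMP (M : List (List ℕ)) : List (List ℕ) := M.reverse.map conjP

/-- `π_{[λ]} = π_{a_1}(u_2) ⋯ π_{a_{m-1}}(u_m)` for `[λ] = [a_0,…,a_m]`. -/
def piOf (R : Type) [CommRing R] (H : Type) [Ring H] [Algebra R H]
    (u : ℕ → R) (Lm : ℕ → H) (M : List (List ℕ)) : H :=
  ((List.range (M.length - 1)).map
    (fun i => piaE R H Lm (u (i + 2)) (cumMP M (i + 1)))).prod

/-- `π̃_{[λ']} = π_{a_1}(u_{m-1}) ⋯ π_{a_{m-1}}(u_1)` for `[λ'] = [a_0,…,a_m]`. -/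
def piTildeOf (R : Type) [CommRing R] (H : Type) [Ring H] [Algebra R H]
    (u : ℕ → R) (Lm : ℕ → H) (M : List (List ℕ)) : H :=
  ((List.range (M.length - 1)).map
    (fun i => piaE R H Lm (u (M.length - 1 - i)) (cumMP M (i + 1)))).prod

/-- `x_c = Σ_{w ∈ S_c} T_w`. -/
def xEl {r : ℕ} {H : Type} [AddCommMonoid H] (T : Equiv.Perm (Fin r) → H)
    (c : List ℕ) : H :=
  ∑ w ∈ Finset.univ.filter (fun w => inYoung c w), T w

/-- `y_c = Σ_{w ∈ S_c} (-q)^{-ℓ(w)} T_w`. -/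
def yEl {r : ℕ} {R : Type} [CommRing R] {H : Type} [AddCommMonoid H] [Module R H]
    (q : Rˣ) (T : Equiv.Perm (Fin r) → H) (c : List ℕ) : H :=
  ∑ w ∈ Finset.univ.filter (fun w => inYoung c w),
    ((((-q)⁻¹ : Rˣ) : R) ^ permLen w) • T w

/-- `x_λ = π_{[λ]} x_{λ̄}`. -/
def xOf (R : Type) [CommRing R] (H : Type) [Ring H] [Algebra R H] {r : ℕ}
    (u : ℕ → R) (Lm : ℕ → H) (T : Equiv.Perm (Fin r) → H)
    (M : List (List ℕ)) : H :=
  piOf R H u Lm M * xEl T M.flatten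

/-- `y_{λ'} = π̃_{[λ']} y_{λ̄'}`. -/
def yOf (R : Type) [CommRing R] (H : Type) [Ring H] [Algebra R H] {r : ℕ}
    (q : Rˣ) (u : ℕ → R) (Lm : ℕ → H) (T : Equiv.Perm (Fin r) → H)
    (M : List (List ℕ)) : H :=
  piTildeOf R H u Lm (dualMP M) * yEl q T (dualConcat M)

/-- `z_λ = x_λ T_{w_λ} y_{λ'}`. -/
def zOf (R : Type) [CommRing R] (H : Type) [Ring H] [Algebra R H] {r : ℕ}
    (q : Rˣ) (u : ℕ → R) (Lm : ℕ → H) (T : Equiv.Perm (Fin r) → H)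
    (M : List (List ℕ)) (w : Equiv.Perm (Fin r)) : H :=
  xOf R H u Lm T M * T w * yOf R H q u Lm T M

/-- `π_a = π_{a_1}(u_2) ⋯ π_{a_{m-1}}(u_m)` for a sequence `a`. -/
def piSeq (R : Type) [CommRing R] (H : Type) [Ring H] [Algebra R H]
    (u : ℕ → R) (Lm : ℕ → H) (m : ℕ) (a : ℕ → ℕ) : H :=
  ((List.range (m - 1)).map (fun i => piaE R H Lm (u (i + 2)) (a (i + 1)))).prod

/-- `π̃_a = π_{a_1}(u_{m-1}) ⋯ π_{a_{m-1}}(u_1)` for a sequence `a`. -/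
def piTildeSeq (R : Type) [CommRing R] (H : Type) [Ring H] [Algebra R H]
    (u : ℕ → R) (Lm : ℕ → H) (m : ℕ) (a : ℕ → ℕ) : H :=
  ((List.range (m - 1)).map (fun i => piaE R H Lm (u (m - 1 - i)) (a (i + 1)))).prod

/-- `v_a = π_a T_{w_a} π̃_{a'}`. -/
def vSeq (R : Type) [CommRing R] (H : Type) [Ring H] [Algebra R H] {r : ℕ}
    (u : ℕ → R) (Lm : ℕ → H) (T : Equiv.Perm (Fin r) → H)
    (m : ℕ) (a : ℕ → ℕ) (wa : Equiv.Perm (Fin r)) : H :=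
  piSeq R H u Lm m a * T wa * piTildeSeq R H u Lm m (fun j => r - a (m - j))


variable {r : ℕ}

lemma sgen_of_ge {k : ℕ} (h : ¬ k + 1 < r) : sgen r k = 1 := by
  simp [sgen, h]

lemma sgen_val {k : ℕ} (hk : k + 1 < r) (x : Fin r) :
    ((sgen r k x : ℕ)) = if (x : ℕ) = k then k + 1 else if (x : ℕ) = k + 1 then k else x := by
  simp only [sgen, dif_pos hk]
  rcases eq_or_ne (x : ℕ) k with h | h
  · have : x = (⟨k, by omega⟩ : Fin r) := by ext; exact h
    rw [this, Equiv.swap_apply_left]; simp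
  · rcases eq_or_ne (x : ℕ) (k+1) with h2 | h2
    · have : x = (⟨k+1, hk⟩ : Fin r) := by ext; exact h2
      rw [this, Equiv.swap_apply_right]; simp
    · rw [Equiv.swap_apply_of_ne_of_ne] <;> simp [h, h2, Fin.ext_iff]

lemma sgen_inv (k : ℕ) : (sgen r k)⁻¹ = sgen r k := by
  by_cases h : k + 1 < r
  · simp [sgen, dif_pos h]
  · simp [sgen_of_ge h]

lemma sgen_mul_self (k : ℕ) : sgen r k * sgen r k = 1 := by
  by_cases h : k + 1 < r
  · simp [sgen, dif_pos h]
  · simp [sgen_of_ge h]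

lemma permLen_one : permLen (1 : Equiv.Perm (Fin r)) = 0 := by
  rw [permLen, Finset.card_eq_zero]
  ext p
  simp only [Finset.mem_filter, Finset.mem_univ, true_and, Finset.notMem_empty, iff_false]
  rintro ⟨h1, h2⟩
  simp only [Equiv.Perm.one_apply] at h2
  exact absurd h1 (not_lt.2 h2.le)

lemma permLen_inv (w : Equiv.Perm (Fin r)) : permLen w⁻¹ = permLen w := by
  rw [permLen, permLen]
  apply Finset.card_bij' (fun p _ => (w⁻¹ p.2, w⁻¹ p.1)) (fun p _ => (w p.2, w p.1))
  · rintro ⟨p, q⟩ hp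
    simp only [Finset.mem_filter, Finset.mem_univ, true_and] at hp ⊢
    exact ⟨hp.2, by simpa using hp.1⟩
  · rintro ⟨p, q⟩ hp
    simp only [Finset.mem_filter, Finset.mem_univ, true_and] at hp ⊢
    exact ⟨hp.2, by simpa using hp.1⟩
  · rintro ⟨p, q⟩ _; simp
  · rintro ⟨p, q⟩ _; simp

lemma sgen_sgen {k : ℕ} (x : Fin r) : sgen r k (sgen r k x) = x := by
  have := congrArg (fun e => e x) (sgen_mul_self (r := r) k)
  simpa using this

lemma sgen_lt {k : ℕ} (hk : k + 1 < r) {p q : Fin r} (hpq : p < q)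
    (hne : ¬((p : ℕ) = k ∧ (q : ℕ) = k + 1)) : sgen r k p < sgen r k q := by
  have h1 := sgen_val hk p
  have h2 := sgen_val hk q
  have hpq' : (p : ℕ) < q := hpq
  have hqr : (q : ℕ) < r := q.2
  rw [Fin.lt_iff_val_lt_val, h1, h2]
  split_ifs <;> omega

lemma permLen_mul_sgen {k : ℕ} (hk : k + 1 < r) (w : Equiv.Perm (Fin r))
    (hw : w ⟨k, by omega⟩ < w ⟨k + 1, hk⟩) :
    permLen (w * sgen r k) = permLen w + 1 := by
  set a : Fin r := ⟨k, by omega⟩ with ha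
  set b : Fin r := ⟨k + 1, hk⟩ with hb
  have hab : a < b := by simp [ha, hb, Fin.lt_iff_val_lt_val]
  have hsa : sgen r k a = b := by
    ext; rw [sgen_val hk]; simp [ha, hb]
  have hsb : sgen r k b = a := by
    ext; rw [sgen_val hk]; simp [ha, hb]
  set S : Finset (Fin r × Fin r) := (Finset.univ.filter
    (fun p : Fin r × Fin r => p.1 < p.2 ∧ w p.2 < w p.1)) with hS
  have memS : ∀ p : Fin r × Fin r, p ∈ S ↔ p.1 < p.2 ∧ w p.2 < w p.1 := by
    intro p; simp [hS]
  set S' : Finset (Fin r × Fin r) := (Finset.univ.filter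
    (fun p : Fin r × Fin r => p.1 < p.2 ∧ (w * sgen r k) p.2 < (w * sgen r k) p.1)) with hS'
  have memS' : ∀ p : Fin r × Fin r, p ∈ S' ↔
      p.1 < p.2 ∧ w (sgen r k p.2) < w (sgen r k p.1) := by
    intro p; rw [hS', Finset.mem_filter]; simp [Equiv.Perm.mul_apply]
  have hne' : ∀ p : Fin r × Fin r, p.1 < p.2 → p ≠ (a, b) →
      sgen r k p.1 < sgen r k p.2 := by
    rintro ⟨p, q⟩ hlt hne
    refine sgen_lt hk hlt ?_
    rintro ⟨h1, h2⟩
    exact hne (by simp only [Prod.mk.injEq]; exact ⟨Fin.ext h1, Fin.ext h2⟩)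
  have hnot : (a, b) ∉ S := by
    rw [memS]
    rintro ⟨-, h2⟩
    exact absurd hw (not_lt.2 h2.le)
  have key : permLen (w * sgen r k) = (insert (a, b) S).card := by
    show S'.card = _
    apply Finset.card_bij'
      (fun p _ => if p = (a, b) then p else (sgen r k p.1, sgen r k p.2))
      (fun p _ => if p = (a, b) then p else (sgen r k p.1, sgen r k p.2))
    · intro p hp
      rw [memS'] at hp
      by_cases hcase : p = (a, b)
      · rw [if_pos hcase, hcase]; exact Finset.mem_insert_self _ _
      · rw [if_neg hcase]
        refine Finset.mem_insert_of_mem ?_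
        rw [memS]
        exact ⟨hne' p hp.1 hcase, by simpa using hp.2⟩
    · intro p hp
      rcases Finset.mem_insert.1 hp with hcase | hmem
      · rw [if_pos hcase, hcase, memS']
        refine ⟨hab, ?_⟩
        rw [hsa, hsb]
        exact hw
      · have hcase : p ≠ (a, b) := by rintro rfl; exact hnot hmem
        rw [if_neg hcase, memS'] at *
        rw [memS] at hmem
        exact ⟨hne' p hmem.1 hcase, by rw [sgen_sgen, sgen_sgen]; exact hmem.2⟩
    · intro p hp
      rw [memS'] at hp
      by_cases hcase : p = (a, b)
      · simp [hcase]
      · rw [if_neg hcase]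
        have h2 : (sgen r k p.1, sgen r k p.2) ≠ (a, b) := by
          intro h
          have h1 : p.1 = b := by
            have := congrArg (fun z => sgen r k z.1) h
            simpa [sgen_sgen, hsa] using this
          have h2 : p.2 = a := by
            have := congrArg (fun z => sgen r k z.2) h
            simpa [sgen_sgen, hsb] using this
          have := hp.1
          rw [h1, h2] at this
          exact absurd hab (not_lt.2 this.le)
        rw [if_neg h2]
        ext <;> simp [sgen_sgen]
    · intro p hp
      by_cases hcase : p = (a, b)
      · simp [hcase]
      · rw [if_neg hcase]
        rcases Finset.mem_insert.1 hp with h | hmem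
        · exact absurd h hcase
        · rw [memS] at hmem
          have h2 : (sgen r k p.1, sgen r k p.2) ≠ (a, b) := by
            intro h
            have h1 : p.1 = b := by
              have := congrArg (fun z => sgen r k z.1) h
              simpa [sgen_sgen, hsa] using this
            have h2' : p.2 = a := by
              have := congrArg (fun z => sgen r k z.2) h
              simpa [sgen_sgen, hsb] using this
            have := hmem.1
            rw [h1, h2'] at this
            exact absurd hab (not_lt.2 this.le)
          rw [if_neg h2]
          ext <;> simp [sgen_sgen]
  rw [key, Finset.card_insert_of_notMem hnot]
  rfl

lemma permLen_mul_sgen' {k : ℕ} (hk : k + 1 < r) (w : Equiv.Perm (Fin r))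
    (hw : w ⟨k + 1, hk⟩ < w ⟨k, by omega⟩) :
    permLen (w * sgen r k) + 1 = permLen w := by
  have h1 : (w * sgen r k) ⟨k, by omega⟩ < (w * sgen r k) ⟨k + 1, hk⟩ := by
    simp only [Equiv.Perm.mul_apply]
    have e1 : sgen r k (⟨k, by omega⟩ : Fin r) = ⟨k + 1, hk⟩ := by
      ext; rw [sgen_val hk]; simp
    have e2 : sgen r k (⟨k + 1, hk⟩ : Fin r) = ⟨k, by omega⟩ := by
      ext; rw [sgen_val hk]; simp
    rw [e1, e2]; exact hw
  have := permLen_mul_sgen hk (w * sgen r k) h1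
  rw [mul_assoc, sgen_mul_self, mul_one] at this
  exact this.symm

lemma permLen_sgen_mul {k : ℕ} (hk : k + 1 < r) (w : Equiv.Perm (Fin r))
    (hw : w⁻¹ ⟨k, by omega⟩ < w⁻¹ ⟨k + 1, hk⟩) :
    permLen (sgen r k * w) = permLen w + 1 := by
  have : permLen ((sgen r k * w)⁻¹) = permLen (w⁻¹ * sgen r k) := by
    rw [mul_inv_rev, sgen_inv]
  rw [← permLen_inv (sgen r k * w), this, permLen_mul_sgen hk w⁻¹ hw, permLen_inv]

lemma permLen_sgen_mul' {k : ℕ} (hk : k + 1 < r) (w : Equiv.Perm (Fin r))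
    (hw : w⁻¹ ⟨k + 1, hk⟩ < w⁻¹ ⟨k, by omega⟩) :
    permLen (sgen r k * w) + 1 = permLen w := by
  have : permLen ((sgen r k * w)⁻¹) = permLen (w⁻¹ * sgen r k) := by
    rw [mul_inv_rev, sgen_inv]
  rw [← permLen_inv (sgen r k * w), this, permLen_mul_sgen' hk w⁻¹ hw, permLen_inv]

lemma permLen_sgen {k : ℕ} (hk : k + 1 < r) : permLen (sgen r k) = 1 := by
  have := permLen_mul_sgen hk 1 (by
    simp only [Equiv.Perm.one_apply, Fin.lt_iff_val_lt_val]; omega)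
  rwa [one_mul, permLen_one] at this

lemma exists_descent {w : Equiv.Perm (Fin r)} (hw : w ≠ 1) :
    ∃ k, ∃ hk : k + 1 < r, w ⟨k + 1, hk⟩ < w ⟨k, by omega⟩ := by
  by_contra hc
  push_neg at hc
  have hmono : ∀ k (hk : k + 1 < r), w ⟨k, by omega⟩ < w ⟨k + 1, hk⟩ := by
    intro k hk
    rcases lt_or_eq_of_le (hc k hk) with h | h
    · exact h
    · exact absurd (w.injective h) (by simp [Fin.ext_iff])
  have hsm : StrictMono w := by
    have : ∀ i : Fin r, ∀ j : Fin r, (i : ℕ) + 1 = (j : ℕ) → w i < w j := by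
      intro i j hij
      have hk : (i : ℕ) + 1 < r := hij ▸ j.2
      have hj : j = ⟨(i : ℕ) + 1, hk⟩ := by ext; simp only [Fin.val_mk]; omega
      rw [hj]
      simpa using hmono (i : ℕ) hk
    intro i j hij
    have : ∀ d : ℕ, ∀ i j : Fin r, (i : ℕ) + d + 1 = (j : ℕ) → w i < w j := by
      intro d
      induction d with
      | zero => intro i j h; exact this i j (by omega)
      | succ n ih =>
        intro i j h
        have hm : ((i : ℕ) + n + 1) < r := by have := j.2; omega
        exact (ih i ⟨(i : ℕ) + n + 1, hm⟩ rfl).trans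
          (this ⟨(i : ℕ) + n + 1, hm⟩ j (by simp only [Fin.val_mk]; omega))
    have hij' : (i : ℕ) < j := hij
    exact this ((j : ℕ) - (i : ℕ) - 1) i j (by omega)
  have inst : WellFoundedLT (Fin r) := inferInstance
  have hle : ∀ x : Fin r, x ≤ w x := fun x => hsm.le_apply
  have hsm' : StrictMono (w⁻¹ : Equiv.Perm (Fin r)) := by
    intro i j hij
    rcases lt_trichotomy (w⁻¹ i) (w⁻¹ j) with h | h | h
    · exact h
    · rw [← (show w (w⁻¹ i) = i from w.apply_symm_apply i), ← (show w (w⁻¹ j) = j from w.apply_symm_apply j), h] at hij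
      exact absurd hij (lt_irrefl _)
    · have h2 := hsm h
      rw [(show w (w⁻¹ i) = i from w.apply_symm_apply i), (show w (w⁻¹ j) = j from w.apply_symm_apply j)] at h2
      exact absurd hij (not_lt.2 h2.le)
  have hle' : ∀ x : Fin r, x ≤ w⁻¹ x := fun x => hsm'.le_apply
  apply hw
  ext x
  have h1 := hle x
  have h2 := hle' (w x)
  rw [show w⁻¹ (w x) = x from w.symm_apply_apply x] at h2
  simp only [Equiv.Perm.one_apply]
  exact le_antisymm (by exact_mod_cast h2) (by exact_mod_cast h1)

structure AKData (R : Type) [CommRing R] (H : Type) [Ring H] [Algebra R H]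
    (r : ℕ) (q : Rˣ) (T : Equiv.Perm (Fin r) → H) (T0 : H) (Lm : ℕ → H) : Prop where
  hT1 : T 1 = 1
  hTmul : ∀ (w : Equiv.Perm (Fin r)) (i : ℕ), i + 1 < r →
      (permLen (sgen r i * w) = permLen w + 1 →
        T w * T (sgen r i) = T (sgen r i * w)) ∧
      (permLen (sgen r i * w) < permLen w →
        T w * T (sgen r i) = (q : R) • T (sgen r i * w) + ((q : R) - 1) • T w)
  hbraid0 : T0 * T (sgen r 0) * T0 * T (sgen r 0)
      = T (sgen r 0) * T0 * T (sgen r 0) * T0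
  hcomm0 : ∀ i, 2 ≤ i → i ≤ r - 1 →
      T0 * T (sgen r (i - 1)) = T (sgen r (i - 1)) * T0
  hL1 : Lm 1 = T0
  hLrec : ∀ i, 2 ≤ i →
      Lm i = (((q⁻¹ : Rˣ)) : R) • (T (sgen r (i - 2)) * Lm (i - 1) * T (sgen r (i - 2)))

namespace AKData

variable {R : Type} [CommRing R] {H : Type} [Ring H] [Algebra R H]
variable {r : ℕ} {q : Rˣ} {T : Equiv.Perm (Fin r) → H} {T0 : H} {Lm : ℕ → H}
variable (D : AKData R H r q T T0 Lm)
include D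

lemma quad (k : ℕ) (hk : k + 1 < r) :
    T (sgen r k) * T (sgen r k) = (q : R) • (1 : H) + ((q : R) - 1) • T (sgen r k) := by
  have h := (D.hTmul (sgen r k) k hk).2
  rw [sgen_mul_self, permLen_one, permLen_sgen hk] at h
  rw [h (by omega), D.hT1]

omit D in
set_option maxHeartbeats 2000000 in
lemma sgen_comm {c d : ℕ} (hcd : c + 2 ≤ d) (hc : c + 1 < r) (hd : d + 1 < r) :
    sgen r c * sgen r d = sgen r d * sgen r c := by
  ext x
  rw [Equiv.Perm.mul_apply, Equiv.Perm.mul_apply,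
    sgen_val hc (sgen r d x), sgen_val hd x,
    sgen_val hd (sgen r c x), sgen_val hc x]
  split_ifs <;> omega

lemma Tcomm {c d : ℕ} (hcd : c + 2 ≤ d) :
    Commute (T (sgen r c)) (T (sgen r d)) := by
  by_cases hd : d + 1 < r
  · have hc : c + 1 < r := by omega
    have len1 : permLen (sgen r d * sgen r c) = permLen (sgen r c) + 1 := by
      refine permLen_sgen_mul hd _ ?_
      rw [sgen_inv, Fin.lt_iff_val_lt_val, sgen_val hc ⟨d, by omega⟩,
        sgen_val hc ⟨d + 1, hd⟩]
      simp only [Fin.val_mk]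
      split_ifs <;> omega
    have len2 : permLen (sgen r c * sgen r d) = permLen (sgen r d) + 1 := by
      refine permLen_sgen_mul hc _ ?_
      rw [sgen_inv, Fin.lt_iff_val_lt_val, sgen_val hd ⟨c, by omega⟩,
        sgen_val hd ⟨c + 1, hc⟩]
      simp only [Fin.val_mk]
      split_ifs <;> omega
    have h1 := (D.hTmul (sgen r c) d hd).1 len1
    have h2 := (D.hTmul (sgen r d) c hc).1 len2
    unfold Commute SemiconjBy
    rw [h1, h2, sgen_comm hcd hc hd]
  · rw [sgen_of_ge hd, D.hT1]
    exact Commute.one_right _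

set_option maxHeartbeats 2000000 in
lemma braid (k : ℕ) (hk : k + 2 < r) :
    T (sgen r k) * T (sgen r (k + 1)) * T (sgen r k)
      = T (sgen r (k + 1)) * T (sgen r k) * T (sgen r (k + 1)) := by
  have hk1 : k + 1 < r := by omega
  set A := sgen r k with hA
  set B := sgen r (k + 1) with hB
  have lenA : permLen A = 1 := permLen_sgen hk1
  have lenB : permLen B = 1 := permLen_sgen hk
  have len1 : permLen (B * A) = permLen A + 1 := by
    refine permLen_sgen_mul hk _ ?_
    rw [hA, sgen_inv, Fin.lt_iff_val_lt_val, sgen_val hk1 ⟨k + 1, by omega⟩,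
      sgen_val hk1 ⟨k + 2, hk⟩]
    simp only [Fin.val_mk]
    split_ifs <;> omega
  have len2 : permLen (A * (B * A)) = permLen (B * A) + 1 := by
    refine permLen_sgen_mul hk1 _ ?_
    rw [Fin.lt_iff_val_lt_val]
    have e : ((B * A)⁻¹ : Equiv.Perm (Fin r)) = A⁻¹ * B⁻¹ := by rw [mul_inv_rev]
    rw [e, hA, hB, sgen_inv, sgen_inv]
    rw [Equiv.Perm.mul_apply, Equiv.Perm.mul_apply,
      sgen_val hk1 (sgen r (k+1) ⟨k, by omega⟩), sgen_val hk ⟨k, by omega⟩,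
      sgen_val hk1 (sgen r (k+1) ⟨k+1, by omega⟩), sgen_val hk ⟨k+1, by omega⟩]
    simp only [Fin.val_mk]
    split_ifs <;> omega
  have len3 : permLen (A * B) = permLen B + 1 := by
    refine permLen_sgen_mul hk1 _ ?_
    rw [hB, sgen_inv, Fin.lt_iff_val_lt_val, sgen_val hk ⟨k, by omega⟩,
      sgen_val hk ⟨k + 1, by omega⟩]
    simp only [Fin.val_mk]
    split_ifs <;> omega
  have len4 : permLen (B * (A * B)) = permLen (A * B) + 1 := by
    refine permLen_sgen_mul hk _ ?_
    have e : ((A * B)⁻¹ : Equiv.Perm (Fin r)) = B⁻¹ * A⁻¹ := by rw [mul_inv_rev]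
    rw [e, hA, hB, sgen_inv, sgen_inv, Fin.lt_iff_val_lt_val]
    rw [Equiv.Perm.mul_apply, Equiv.Perm.mul_apply,
      sgen_val hk (sgen r k ⟨k+1, by omega⟩), sgen_val hk1 ⟨k+1, by omega⟩,
      sgen_val hk (sgen r k ⟨k+2, hk⟩), sgen_val hk1 ⟨k+2, hk⟩]
    simp only [Fin.val_mk]
    split_ifs <;> omega
  have hperm : A * (B * A) = B * (A * B) := by
    ext x
    simp only [Equiv.Perm.mul_apply]
    rw [hA, hB, sgen_val hk1 (sgen r (k+1) (sgen r k x)),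
      sgen_val hk (sgen r k x), sgen_val hk1 x,
      sgen_val hk (sgen r k (sgen r (k+1) x)),
      sgen_val hk1 (sgen r (k+1) x), sgen_val hk x]
    split_ifs <;> omega
  have s1 : T A * T B = T (B * A) := (D.hTmul A (k+1) hk).1 len1
  have s2 : T (B * A) * T A = T (A * (B * A)) := (D.hTmul (B * A) k hk1).1 len2
  have s3 : T B * T A = T (A * B) := (D.hTmul B k hk1).1 len3
  have s4 : T (A * B) * T B = T (B * (A * B)) := (D.hTmul (A * B) (k+1) hk).1 len4
  calc T A * T B * T A = T (B * A) * T A := by rw [s1]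
    _ = T (A * (B * A)) := s2
    _ = T (B * (A * B)) := by rw [hperm]
    _ = T (A * B) * T B := s4.symm
    _ = T B * T A * T B := by rw [s3]

end AKData

namespace AKData
variable {R : Type} [CommRing R] {H : Type} [Ring H] [Algebra R H]
variable {r : ℕ} {q : Rˣ} {T : Equiv.Perm (Fin r) → H} {T0 : H} {Lm : ℕ → H}
variable (D : AKData R H r q T T0 Lm)

lemma dicho_left {j : ℕ} (hj : j + 1 < r) (v : Equiv.Perm (Fin r)) :
    permLen (sgen r j * v) = permLen v + 1 ∨ permLen (sgen r j * v) + 1 = permLen v := by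
  rcases lt_trichotomy (v⁻¹ ⟨j, by omega⟩) (v⁻¹ ⟨j + 1, hj⟩) with h | h | h
  · exact Or.inl (permLen_sgen_mul hj v h)
  · exfalso
    have := v⁻¹.injective h
    simp only [Fin.mk.injEq] at this
    omega
  · exact Or.inr (permLen_sgen_mul' hj v h)

lemma dicho_right {k : ℕ} (hk : k + 1 < r) (v : Equiv.Perm (Fin r)) :
    permLen (v * sgen r k) = permLen v + 1 ∨ permLen (v * sgen r k) + 1 = permLen v := by
  rcases lt_trichotomy (v ⟨k, by omega⟩) (v ⟨k + 1, hk⟩) with h | h | h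
  · exact Or.inl (permLen_mul_sgen hk v h)
  · exfalso
    have := v.injective h
    simp only [Fin.mk.injEq] at this
    omega
  · exact Or.inr (permLen_mul_sgen' hk v h)

include D

lemma Tmul_left : ∀ (n : ℕ) (w : Equiv.Perm (Fin r)), permLen w ≤ n →
    ∀ k, k + 1 < r → permLen (w * sgen r k) = permLen w + 1 →
      T (sgen r k) * T w = T (w * sgen r k) := by
  intro n
  induction n with
  | zero =>
    intro w hw k hk hlen
    have hw1 : w = 1 := by
      by_contra hne
      obtain ⟨j, hj, hdesc⟩ := exists_descent (w := w⁻¹) (by simpa using hne)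
      have h2 : w⁻¹ ⟨j + 1, hj⟩ < w⁻¹ ⟨j, by omega⟩ := by
        simpa using hdesc
      have := permLen_sgen_mul' hj w h2
      omega
    rw [hw1, D.hT1, mul_one, one_mul]
  | succ n ih =>
    intro w hw k hk hlen
    by_cases hw1 : w = 1
    · rw [hw1, D.hT1, mul_one, one_mul]
    · obtain ⟨j, hj, hdesc⟩ := exists_descent (w := w⁻¹) (by simpa using hw1)
      have hdesc' : w⁻¹ ⟨j + 1, hj⟩ < w⁻¹ ⟨j, by omega⟩ := hdesc
      set w' := sgen r j * w with hw'
      have hlen' : permLen w' + 1 = permLen w := permLen_sgen_mul' hj w hdesc'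
      have hww' : sgen r j * w' = w := by
        rw [hw', ← mul_assoc, sgen_mul_self, one_mul]
      have hTw : T w' * T (sgen r j) = T w := by
        have := (D.hTmul w' j hj).1 (by rw [hww']; omega)
        rwa [hww'] at this
      have hlen1 : permLen (w' * sgen r k) = permLen w' + 1 := by
        rcases dicho_right hk w' with h | h
        · exact h
        · exfalso
          have heq : sgen r j * (w' * sgen r k) = w * sgen r k := by
            rw [← mul_assoc, hww']
          rcases dicho_left hj (w' * sgen r k) with h2 | h2 <;>
            rw [heq] at h2 <;> omega
      have hstep1 : T (sgen r k) * T w' = T (w' * sgen r k) :=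
        ih w' (by omega) k hk hlen1
      have hstep2 : T (w' * sgen r k) * T (sgen r j) = T (w * sgen r k) := by
        have heq : sgen r j * (w' * sgen r k) = w * sgen r k := by
          rw [← mul_assoc, hww']
        have := (D.hTmul (w' * sgen r k) j hj).1 (by rw [heq]; omega)
        rwa [heq] at this
      calc T (sgen r k) * T w = T (sgen r k) * (T w' * T (sgen r j)) := by rw [hTw]
        _ = T (sgen r k) * T w' * T (sgen r j) := by rw [mul_assoc]
        _ = T (w' * sgen r k) * T (sgen r j) := by rw [hstep1]
        _ = T (w * sgen r k) := hstep2

end AKData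

namespace AKData
variable {R : Type} [CommRing R] {H : Type} [Ring H] [Algebra R H]
variable {r : ℕ} {q : Rˣ} {T : Equiv.Perm (Fin r) → H} {T0 : H} {Lm : ℕ → H}
variable (D : AKData R H r q T T0 Lm)

omit D in
lemma smul_cancel {x y : H} (h : ((q⁻¹ : Rˣ) : R) • x = ((q⁻¹ : Rˣ) : R) • y) :
    x = y := by
  have h2 := congrArg (fun z => (q : R) • z) h
  simpa only [smul_smul, Units.mul_inv, one_smul] using h2

include D

lemma LmExp (p : ℕ) :
    Lm (p + 2) = ((q⁻¹ : Rˣ) : R) • (T (sgen r p) * Lm (p + 1) * T (sgen r p)) := by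
  have h := D.hLrec (p + 2) (by omega)
  simpa using h

lemma C1 : ∀ j k : ℕ, 1 ≤ j → j ≤ k → Commute (T (sgen r k)) (Lm j) := by
  intro j
  induction j with
  | zero => intro k h; omega
  | succ p ih =>
    intro k _ hpk
    rcases Nat.eq_zero_or_pos p with hp | hp
    · subst hp
      rw [D.hL1]
      by_cases hk : k + 1 < r
      · exact (D.hcomm0 (k + 1) (by omega) (by omega)).symm
      · rw [sgen_of_ge hk, D.hT1]; exact Commute.one_left _
    · have hp2 : p + 1 = (p - 1) + 2 := by omega
      rw [hp2, D.LmExp (p - 1)]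
      have c1 : Commute (T (sgen r k)) (T (sgen r (p - 1))) :=
        (Tcomm D (by omega)).symm
      have c2 : Commute (T (sgen r k)) (Lm (p - 1 + 1)) := by
        have := ih k hp (by omega)
        rwa [show p - 1 + 1 = p by omega]
      exact ((c1.mul_right c2).mul_right c1).smul_right _

lemma E1 : ∀ k : ℕ, k + 2 ≤ r → Commute (Lm (k + 1)) (Lm (k + 2)) := by
  intro k
  induction k with
  | zero =>
    intro hr
    have h2 : Lm 2 = ((q⁻¹ : Rˣ) : R) • (T (sgen r 0) * Lm 1 * T (sgen r 0)) :=
      D.LmExp 0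
    rw [D.hL1] at h2 ⊢
    rw [h2]
    refine Commute.smul_right ?_ _
    show T0 * (T (sgen r 0) * T0 * T (sgen r 0)) = (T (sgen r 0) * T0 * T (sgen r 0)) * T0
    simp only [← mul_assoc]
    exact D.hbraid0
  | succ p ih =>
    intro hr
    set s := T (sgen r p) with hs
    set t := T (sgen r (p + 1)) with ht
    set A := Lm (p + 1) with hA
    have hB : Lm (p + 2) = ((q⁻¹ : Rˣ) : R) • (s * A * s) := D.LmExp p
    have hC : Lm (p + 3) = ((q⁻¹ : Rˣ) : R) • (t * Lm (p + 2) * t) := D.LmExp (p + 1)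
    have m1e : s * t * s = t * s * t := braid D p (by omega)
    have m1c : ∀ X : H, s * (t * (s * X)) = t * (s * (t * X)) := by
      intro X
      calc s * (t * (s * X)) = (s * t * s) * X := by simp only [mul_assoc]
        _ = (t * s * t) * X := by rw [m1e]
        _ = t * (s * (t * X)) := by simp only [mul_assoc]
    have m1e' : t * (s * t) = s * (t * s) := by
      simp only [← mul_assoc]; exact m1e.symm
    have m2 : Commute t A := C1 D (p + 1) (p + 1) (by omega) le_rfl
    have m2c : ∀ X : H, A * (t * X) = t * (A * X) := by
      intro X
      calc A * (t * X) = (A * t) * X := by rw [mul_assoc]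
        _ = (t * A) * X := by rw [m2.eq]
        _ = t * (A * X) := by rw [mul_assoc]
    have m2c' : ∀ X : H, t * (A * X) = A * (t * X) := fun X => (m2c X).symm
    have m3e : A * (s * (A * s)) = s * (A * (s * A)) := by
      have h := ih (by omega)
      rw [hB] at h
      have h2 : A * (((q⁻¹ : Rˣ) : R) • (s * A * s)) =
          (((q⁻¹ : Rˣ) : R) • (s * A * s)) * A := h.eq
      rw [mul_smul_comm, smul_mul_assoc] at h2
      have h3 := smul_cancel (q := q) h2
      calc A * (s * (A * s)) = A * (s * A * s) := by simp only [mul_assoc]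
        _ = s * A * s * A := h3
        _ = s * (A * (s * A)) := by simp only [mul_assoc]
    have m3c : ∀ X : H, A * (s * (A * (s * X))) = s * (A * (s * (A * X))) := by
      intro X
      calc A * (s * (A * (s * X))) = (A * (s * (A * s))) * X := by simp only [mul_assoc]
        _ = (s * (A * (s * A))) * X := by rw [m3e]
        _ = s * (A * (s * (A * X))) := by simp only [mul_assoc]
    have key : s * (A * (s * (t * (s * (A * (s * t)))))) =
        t * (s * (A * (s * (t * (s * (A * s)))))) := by
      rw [m1c (A * (s * t)), m2c (s * (t * (A * (s * t)))), m2c' (s * t), m1e',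
        m3c (t * s), m1c (A * (s * (A * (t * s)))), m2c s,
        m1c (A * s), m2c (s * (t * (A * s)))]
    rw [hC, hB]
    refine Commute.smul_right ?_ _
    refine Commute.smul_left ?_ _
    show (s * A * s) * (t * (((q⁻¹ : Rˣ) : R) • (s * A * s)) * t)
        = (t * (((q⁻¹ : Rˣ) : R) • (s * A * s)) * t) * (s * A * s)
    simp only [mul_smul_comm, smul_mul_assoc, mul_assoc]
    rw [key]

end AKData

namespace AKData
variable {R : Type} [CommRing R] {H : Type} [Ring H] [Algebra R H]
variable {r : ℕ} {q : Rˣ} {T : Equiv.Perm (Fin r) → H} {T0 : H} {Lm : ℕ → H}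
variable (D : AKData R H r q T T0 Lm)
include D

lemma C2 : ∀ j k : ℕ, k + 3 ≤ j → j ≤ r → Commute (T (sgen r k)) (Lm j) := by
  intro j
  induction j with
  | zero => intro k h; omega
  | succ p ih =>
    intro k hkj hjr
    rcases Nat.lt_or_ge (k + 3) (p + 1) with hlt | hge
    · -- p + 1 ≥ k + 4 : inductive step
      have hp2 : p + 1 = (p - 1) + 2 := by omega
      rw [hp2, D.LmExp (p - 1)]
      have c1 : Commute (T (sgen r k)) (T (sgen r (p - 1))) :=
        Tcomm D (by omega)
      have c2 : Commute (T (sgen r k)) (Lm (p - 1 + 1)) := by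
        have := ih k (by omega) (by omega)
        rwa [show p - 1 + 1 = p by omega]
      exact ((c1.mul_right c2).mul_right c1).smul_right _
    · -- base case : p + 1 = k + 3
      have hp : p + 1 = k + 3 := by omega
      rw [hp]
      set s := T (sgen r k) with hs
      set t := T (sgen r (k + 1)) with ht
      set A := Lm (k + 1) with hA
      have hB : Lm (k + 2) = ((q⁻¹ : Rˣ) : R) • (s * A * s) := D.LmExp k
      have hC : Lm (k + 3) = ((q⁻¹ : Rˣ) : R) • (t * Lm (k + 2) * t) := D.LmExp (k + 1)
      have m1e : s * t * s = t * s * t := braid D k (by omega)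
      have m1c : ∀ X : H, s * (t * (s * X)) = t * (s * (t * X)) := by
        intro X
        calc s * (t * (s * X)) = (s * t * s) * X := by simp only [mul_assoc]
          _ = (t * s * t) * X := by rw [m1e]
          _ = t * (s * (t * X)) := by simp only [mul_assoc]
      have m1e' : t * (s * t) = s * (t * s) := by
        simp only [← mul_assoc]; exact m1e.symm
      have m2 : Commute t A := C1 D (k + 1) (k + 1) (by omega) le_rfl
      have m2c' : ∀ X : H, t * (A * X) = A * (t * X) := by
        intro X
        calc t * (A * X) = (t * A) * X := by rw [mul_assoc]
          _ = (A * t) * X := by rw [m2.eq.symm]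
          _ = A * (t * X) := by rw [mul_assoc]
      have key : s * (t * (s * (A * (s * t)))) = t * (s * (A * (s * (t * s)))) := by
        rw [m1c (A * (s * t)), m2c' (s * t), m1e']
      rw [hC, hB]
      refine Commute.smul_right ?_ _
      show s * (t * (((q⁻¹ : Rˣ) : R) • (s * A * s)) * t)
          = (t * (((q⁻¹ : Rˣ) : R) • (s * A * s)) * t) * s
      simp only [mul_smul_comm, smul_mul_assoc, mul_assoc]
      rw [key]

end AKData

namespace AKData
variable {R : Type} [CommRing R] {H : Type} [Ring H] [Algebra R H]
variable {r : ℕ} {q : Rˣ} {T : Equiv.Perm (Fin r) → H} {T0 : H} {Lm : ℕ → H}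
variable (D : AKData R H r q T T0 Lm)

omit D in
lemma piaE_add (x : R) (c d : ℕ) :
    piaE R H Lm x (c + d) = piaE R H Lm x c *
      ((List.range d).map (fun j => Lm (c + j + 1) - algebraMap R H x)).prod := by
  unfold piaE
  rw [List.range_add, List.map_append, List.prod_append, List.map_map]
  rfl

include D

lemma C3a (k : ℕ) (hk2 : k + 2 ≤ r) :
    Commute (T (sgen r k)) (Lm (k + 1) * Lm (k + 2)) := by
  set s := T (sgen r k) with hs
  set A := Lm (k + 1) with hA
  have hB : Lm (k + 2) = ((q⁻¹ : Rˣ) : R) • (s * A * s) := D.LmExp k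
  have m3e : A * (s * (A * s)) = s * (A * (s * A)) := by
    have h := E1 D k hk2
    rw [hB] at h
    have h2 : A * (((q⁻¹ : Rˣ) : R) • (s * A * s)) =
        (((q⁻¹ : Rˣ) : R) • (s * A * s)) * A := h.eq
    rw [mul_smul_comm, smul_mul_assoc] at h2
    have h3 := smul_cancel (q := q) h2
    calc A * (s * (A * s)) = A * (s * A * s) := by simp only [mul_assoc]
      _ = s * A * s * A := h3
      _ = s * (A * (s * A)) := by simp only [mul_assoc]
  have m3c : ∀ X : H, A * (s * (A * (s * X))) = s * (A * (s * (A * X))) := by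
    intro X
    calc A * (s * (A * (s * X))) = (A * (s * (A * s))) * X := by simp only [mul_assoc]
      _ = (s * (A * (s * A))) * X := by rw [m3e]
      _ = s * (A * (s * (A * X))) := by simp only [mul_assoc]
  rw [hB]
  show s * (A * (((q⁻¹ : Rˣ) : R) • (s * A * s)))
      = (A * (((q⁻¹ : Rˣ) : R) • (s * A * s))) * s
  simp only [mul_smul_comm, smul_mul_assoc, mul_assoc]
  rw [m3c s]

lemma C3b (k : ℕ) (hk2 : k + 2 ≤ r) :
    Commute (T (sgen r k)) (Lm (k + 1) + Lm (k + 2)) := by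
  set s := T (sgen r k) with hs
  set A := Lm (k + 1) with hA
  have hB : Lm (k + 2) = ((q⁻¹ : Rˣ) : R) • (s * A * s) := D.LmExp k
  have hq : s * s = (q : R) • (1 : H) + ((q : R) - 1) • s := quad D k (by omega)
  have hu : ((q⁻¹ : Rˣ) : R) * (q : R) = 1 := Units.inv_mul q
  rw [hB]
  show s * (A + ((q⁻¹ : Rˣ) : R) • (s * A * s))
      = (A + ((q⁻¹ : Rˣ) : R) • (s * A * s)) * s
  rw [mul_add, add_mul, mul_smul_comm, smul_mul_assoc]
  have e1 : s * (s * A * s) = ((q : R) • (1 : H) + ((q : R) - 1) • s) * (A * s) := by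
    rw [← hq]; simp only [mul_assoc]
  have e2 : s * A * s * s = (s * A) * ((q : R) • (1 : H) + ((q : R) - 1) • s) := by
    rw [← hq]; simp only [mul_assoc]
  rw [e1, e2]
  simp only [add_mul, mul_add, smul_mul_assoc, mul_smul_comm, smul_add, smul_smul,
    one_mul, mul_one, hu, one_smul, mul_assoc]
  abel

lemma C4 (x : R) (k b : ℕ) (hbr : b ≤ r) (hbk : b ≠ k + 1) :
    Commute (T (sgen r k)) (piaE R H Lm x b) := by
  rcases Nat.lt_or_ge b (k + 1) with hb | hb
  · -- b ≤ k
    unfold piaE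
    refine Commute.list_prod_right _ _ ?_
    intro y hy
    rw [List.mem_map] at hy
    obtain ⟨j, hj, rfl⟩ := hy
    rw [List.mem_range] at hj
    exact (C1 D (j + 1) k (by omega) (by omega)).sub_right
      ((Algebra.commutes x (T (sgen r k))).symm)
  · -- b ≥ k + 2
    have hb2 : b = (k + 2) + (b - (k + 2)) := by omega
    rw [hb2, piaE_add, piaE_add]
    have c1 : Commute (T (sgen r k)) (piaE R H Lm x k) := by
      unfold piaE
      refine Commute.list_prod_right _ _ ?_
      intro y hy
      rw [List.mem_map] at hy
      obtain ⟨j, hj, rfl⟩ := hy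
      rw [List.mem_range] at hj
      exact (C1 D (j + 1) k (by omega) (by omega)).sub_right
        ((Algebra.commutes x (T (sgen r k))).symm)
    have c2 : Commute (T (sgen r k))
        (((List.range 2).map (fun j => Lm (k + j + 1) - algebraMap R H x)).prod) := by
      have hr2 : (List.range 2).map (fun j => Lm (k + j + 1) - algebraMap R H x)
          = [Lm (k + 1) - algebraMap R H x, Lm (k + 2) - algebraMap R H x] := by
        simp [List.range_succ]
      rw [hr2, List.prod_cons, List.prod_cons, List.prod_nil, mul_one]
      set A := Lm (k + 1)
      set B := Lm (k + 2)
      set c := algebraMap R H x with hc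
      have ccomm : Commute (T (sgen r k)) c := (Algebra.commutes x (T (sgen r k))).symm
      have hA : A * c = c * A := (Algebra.commutes x A).symm
      have expand : (A - c) * (B - c) = A * B - c * (A + B) + c * c := by
        rw [sub_mul, mul_sub, mul_sub, hA, mul_add]
        abel
      rw [expand]
      have d1 : Commute (T (sgen r k)) (A * B) := C3a D k (by omega)
      have d2 : Commute (T (sgen r k)) (c * (A + B)) :=
        ccomm.mul_right (C3b D k (by omega))
      have d3 : Commute (T (sgen r k)) (c * c) := ccomm.mul_right ccomm
      exact (d1.sub_right d2).add_right d3
    have c3 : Commute (T (sgen r k))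
        (((List.range (b - (k + 2))).map
          (fun j => Lm (k + 2 + j + 1) - algebraMap R H x)).prod) := by
      refine Commute.list_prod_right _ _ ?_
      intro y hy
      rw [List.mem_map] at hy
      obtain ⟨j, hj, rfl⟩ := hy
      rw [List.mem_range] at hj
      exact (C2 D (k + 2 + j + 1) k (by omega) (by omega)).sub_right
        ((Algebra.commutes x (T (sgen r k))).symm)
    exact (c1.mul_right c2).mul_right c3

end AKData

/-- (3.4b): `v_a T_i = T_{(i)w_a⁻¹} v_a` whenever
`i ≠ r - a_j` for all `j`.  Generators are 1-indexed as in the paper: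
`T_i = T_{s_i}` corresponds to `T (sgen r (i-1))`. -/
theorem stmt13 (R : Type) [CommRing R] (H : Type) [Ring H] [Algebra R H]
    (m r : ℕ) (hm : 0 < m) (q : Rˣ) (u : ℕ → R)
    (T : Equiv.Perm (Fin r) → H) (T0 : H) (Lm : ℕ → H)
    (hT1 : T 1 = 1)
    (hTmul : ∀ (w : Equiv.Perm (Fin r)) (i : ℕ), i + 1 < r →
      (permLen (sgen r i * w) = permLen w + 1 →
        T w * T (sgen r i) = T (sgen r i * w)) ∧
      (permLen (sgen r i * w) < permLen w →
        T w * T (sgen r i) = (q : R) • T (sgen r i * w) + ((q : R) - 1) • T w))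
    (hcyclo : ((List.range m).map (fun i => T0 - algebraMap R H (u (i + 1)))).prod = 0)
    (hbraid0 : T0 * T (sgen r 0) * T0 * T (sgen r 0)
      = T (sgen r 0) * T0 * T (sgen r 0) * T0)
    (hcomm0 : ∀ i, 2 ≤ i → i ≤ r - 1 →
      T0 * T (sgen r (i - 1)) = T (sgen r (i - 1)) * T0)
    (hL1 : Lm 1 = T0)
    (hLrec : ∀ i, 2 ≤ i →
      Lm i = (((q⁻¹ : Rˣ)) : R) • (T (sgen r (i - 2)) * Lm (i - 1) * T (sgen r (i - 2))))
    (a : ℕ → ℕ) (ha0 : a 0 = 0) (ham : a m = r)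
    (hmono : ∀ i, i < m → a i ≤ a (i + 1))
    (wa : Equiv.Perm (Fin r))
    (hwa : ∀ i, 1 ≤ i → i ≤ m → ∀ l, 1 ≤ l → l ≤ a i - a (i - 1) →
      pApp wa (a (i - 1) + l - 1) = r - a i + l - 1) :
    ∀ i, 1 ≤ i → i ≤ r - 1 → (∀ j, 1 ≤ j → j ≤ m → i ≠ r - a j) →
      vSeq R H u Lm T m a wa * T (sgen r (i - 1)) =
        T (sgen r (pApp wa⁻¹ (i - 1))) * vSeq R H u Lm T m a wa := by
  intro i hi1 hi2 hie
  have D : AKData R H r q T T0 Lm := ⟨hT1, hTmul, hbraid0, hcomm0, hL1, hLrec⟩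
  have amono : ∀ p t : ℕ, p ≤ t → t ≤ m → a p ≤ a t := by
    intro p t hpt htm
    induction t with
    | zero => have : p = 0 := by omega
              rw [this]
    | succ n ihn =>
      rcases Nat.lt_or_ge p (n + 1) with h | h
      · exact le_trans (ihn (by omega) (by omega)) (hmono n (by omega))
      · have : p = n + 1 := by omega
        rw [this]
  have har : ∀ t, t ≤ m → a t ≤ r := fun t ht => ham ▸ amono t m ht le_rfl
  have hrm : 2 ≤ r := by omega
  have hir : i < r := by omega
  -- find the block j containing positions i-1 and i (in values)
  have hPm : r < a m + i := by rw [ham]; omega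
  set j := Nat.find (⟨m, hPm⟩ : ∃ t, r < a t + i) with hj
  have hPj : r < a j + i := Nat.find_spec (⟨m, hPm⟩ : ∃ t, r < a t + i)
  have hjm : j ≤ m := Nat.find_min' _ hPm
  have hj1 : 1 ≤ j := by
    rcases Nat.eq_zero_or_pos j with h0 | h0
    · exfalso; rw [h0, ha0] at hPj; omega
    · exact h0
  have hlow : a (j - 1) + i ≤ r := by
    have := Nat.find_min (⟨m, hPm⟩ : ∃ t, r < a t + i) (show j - 1 < j by omega)
    omega
  have hstrict : a (j - 1) + i < r := by
    by_contra hcon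
    have heq : a (j - 1) + i = r := by omega
    rcases Nat.eq_zero_or_pos (j - 1) with h0 | h0
    · rw [h0, ha0] at heq; omega
    · exact hie (j - 1) (by omega) (by omega) (by omega)
  have haj : a (j - 1) ≤ a j := amono (j - 1) j (by omega) hjm
  have hajr : a j ≤ r := har j hjm
  set l := a j + i - r with hl
  have hl1 : 1 ≤ l := by omega
  have hl2 : l + 1 ≤ a j - a (j - 1) := by omega
  set k := a (j - 1) + l - 1 with hk
  have hk1aj : k + 1 < a j := by omega
  have hkr : k + 1 < r := by omega
  have hkr' : k < r := by omega
  have hi1r : (i - 1) + 1 < r := by omega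
  have h1 := hwa j (by omega) hjm l hl1 (by omega)
  have h2 := hwa j (by omega) hjm (l + 1) (by omega) (by omega)
  rw [show a (j - 1) + l - 1 = k by omega, show r - a j + l - 1 = i - 1 by omega] at h1
  rw [show a (j - 1) + (l + 1) - 1 = k + 1 by omega,
    show r - a j + (l + 1) - 1 = i by omega] at h2
  have wak : wa ⟨k, hkr'⟩ = ⟨i - 1, by omega⟩ := by
    rw [pApp, dif_pos hkr'] at h1; exact Fin.ext h1
  have wak1 : wa ⟨k + 1, hkr⟩ = ⟨i, hir⟩ := by
    rw [pApp, dif_pos hkr] at h2; exact Fin.ext h2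
  have e1 : wa⁻¹ (⟨i - 1, by omega⟩ : Fin r) = ⟨k, hkr'⟩ := by
    rw [← wak, show wa⁻¹ (wa ⟨k, hkr'⟩) = ⟨k, hkr'⟩ from wa.symm_apply_apply _]
  have e2 : wa⁻¹ (⟨i, hir⟩ : Fin r) = ⟨k + 1, hkr⟩ := by
    rw [← wak1, show wa⁻¹ (wa ⟨k + 1, hkr⟩) = ⟨k + 1, hkr⟩ from wa.symm_apply_apply _]
  have hinv : pApp wa⁻¹ (i - 1) = k := by
    rw [pApp, dif_pos (show i - 1 < r by omega), e1]
  -- the permutation identity s_{i-1} * wa = wa * s_k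
  have sperm : sgen r (i - 1) * wa = wa * sgen r k := by
    ext x
    simp only [Equiv.Perm.mul_apply]
    rcases eq_or_ne (x : ℕ) k with h | h
    · have hx : x = ⟨k, hkr'⟩ := Fin.ext h
      have es : sgen r k (⟨k, hkr'⟩ : Fin r) = ⟨k + 1, hkr⟩ := by
        ext; rw [sgen_val hkr]; simp
      rw [hx, wak, es, wak1, sgen_val hi1r]
      simp only [Fin.val_mk]
      split_ifs <;> omega
    · rcases eq_or_ne (x : ℕ) (k + 1) with h' | h'
      · have hx : x = ⟨k + 1, hkr⟩ := Fin.ext h'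
        have es : sgen r k (⟨k + 1, hkr⟩ : Fin r) = ⟨k, hkr'⟩ := by
          ext; rw [sgen_val hkr]; simp
        rw [hx, wak1, es, wak, sgen_val hi1r]
        simp only [Fin.val_mk]
        split_ifs <;> omega
      · have es : sgen r k x = x := by
          ext; rw [sgen_val hkr]; simp [h, h']
        rw [es, sgen_val hi1r]
        have hne1 : ((wa x : Fin r) : ℕ) ≠ i - 1 := by
          intro hcon
          apply h
          have : wa x = wa ⟨k, hkr'⟩ := by
            rw [wak]; exact Fin.ext (by simpa using hcon)
          rw [show x = ⟨k, hkr'⟩ from wa.injective this]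
        have hne2 : ((wa x : Fin r) : ℕ) ≠ i := by
          intro hcon
          apply h'
          have : wa x = wa ⟨k + 1, hkr⟩ := by
            rw [wak1]; exact Fin.ext (by simpa using hcon)
          rw [show x = ⟨k + 1, hkr⟩ from wa.injective this]
        split_ifs <;> omega
  -- lengths and the two T-product identities
  have hlen1 : permLen (sgen r (i - 1) * wa) = permLen wa + 1 := by
    refine permLen_sgen_mul hi1r wa ?_
    have e2' : wa⁻¹ (⟨(i - 1) + 1, hi1r⟩ : Fin r) = ⟨k + 1, hkr⟩ := by
      rw [show (⟨(i - 1) + 1, hi1r⟩ : Fin r) = ⟨i, hir⟩ from Fin.ext (by simp; omega), e2]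
    rw [e1, e2']
    simp [Fin.lt_iff_val_lt_val]
  have hlen2 : permLen (wa * sgen r k) = permLen wa + 1 := by
    refine permLen_mul_sgen hkr wa ?_
    rw [wak, wak1]
    simp [Fin.lt_iff_val_lt_val]
    omega
  have stepA : T wa * T (sgen r (i - 1)) = T (sgen r (i - 1) * wa) :=
    (hTmul wa (i - 1) hi1r).1 hlen1
  have stepB : T (sgen r k) * T wa = T (wa * sgen r k) :=
    D.Tmul_left (permLen wa) wa le_rfl k hkr hlen2
  have stepC : T wa * T (sgen r (i - 1)) = T (sgen r k) * T wa := by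
    rw [stepA, sperm, ← stepB]
  -- commutation with the pi products
  have commP : Commute (T (sgen r k)) (piSeq R H u Lm m a) := by
    unfold piSeq
    refine Commute.list_prod_right _ _ ?_
    intro y hy
    rw [List.mem_map] at hy
    obtain ⟨t, ht, rfl⟩ := hy
    rw [List.mem_range] at ht
    refine D.C4 (u (t + 2)) k (a (t + 1)) (har (t + 1) (by omega)) ?_
    intro hcon
    rcases Nat.lt_or_ge (t + 1) j with hlt | hge
    · have := amono (t + 1) (j - 1) (by omega) (by omega); omega
    · have := amono j (t + 1) hge (by omega); omega
  have commPt : Commute (T (sgen r (i - 1)))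
      (piTildeSeq R H u Lm m (fun j => r - a (m - j))) := by
    unfold piTildeSeq
    refine Commute.list_prod_right _ _ ?_
    intro y hy
    rw [List.mem_map] at hy
    obtain ⟨t, ht, rfl⟩ := hy
    rw [List.mem_range] at ht
    refine D.C4 _ (i - 1) (r - a (m - (t + 1))) (by omega) ?_
    intro hcon
    exact hie (m - (t + 1)) (by omega) (by omega) (by omega)
  -- assemble
  rw [hinv]
  unfold vSeq
  set P := piSeq R H u Lm m a with hP
  set Pt := piTildeSeq R H u Lm m (fun j => r - a (m - j)) with hPt
  calc P * T wa * Pt * T (sgen r (i - 1))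
      = P * T wa * (Pt * T (sgen r (i - 1))) := by rw [mul_assoc]
    _ = P * T wa * (T (sgen r (i - 1)) * Pt) := by rw [commPt.symm.eq]
    _ = P * (T wa * T (sgen r (i - 1))) * Pt := by simp only [mul_assoc]
    _ = P * (T (sgen r k) * T wa) * Pt := by rw [stepC]
    _ = P * T (sgen r k) * T wa * Pt := by simp only [mul_assoc]
    _ = T (sgen r k) * P * T wa * Pt := by rw [commP.symm.eq]
    _ = T (sgen r k) * (P * T wa * Pt) := by simp only [mul_assoc]
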